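/- Let T be a contraction on a Hilbert space H. The 2×2 Halmos block operator on H ⊕ H given by the matrix [[D_T, −T*],[T, D_{T*}]] is a unitary operator, where D_T = (I − T*T)^{1/2} and D_{T*} = (I − TT*)^{1/2}. -/

import Mathlib

set_option maxHeartbeats 1000000
set_option synthInstance.maxHeartbeats 200000

open ContinuousLinearMap Polynomial

section Intertwine

variable {H : Type*} [NormedAddCommGroup H] [InnerProductSpace ℂ H] [CompleteSpace H]

lemma intertwine_pow (T a b : H →L[ℂ] H) (hab : T * a = b * T) (n : ℕ) :
    T * a ^ n = b ^ n * T := by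
  induction n with
  | zero => simp
  | succ n ih =>
    calc T * a ^ (n + 1) = (T * a ^ n) * a := by rw [pow_succ, mul_assoc]
      _ = b ^ n * (T * a) := by rw [ih, mul_assoc]
      _ = b ^ n * (b * T) := by rw [hab]
      _ = b ^ (n + 1) * T := by rw [pow_succ, mul_assoc]

lemma intertwine_aeval (T a b : H →L[ℂ] H) (hab : T * a = b * T) (p : ℝ[X]) :
    T * (aeval a p) = (aeval b p) * T := by
  induction p using Polynomial.induction_on' with
  | add p q hp hq => simp [map_add, mul_add, add_mul, hp, hq]
  | monomial n c =>
    simp only [aeval_monomial]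
    calc T * (algebraMap ℝ (H →L[ℂ] H) c * a ^ n)
        = (T * algebraMap ℝ (H →L[ℂ] H) c) * a ^ n := by rw [mul_assoc]
      _ = (algebraMap ℝ (H →L[ℂ] H) c * T) * a ^ n := by rw [← Algebra.commutes]
      _ = algebraMap ℝ (H →L[ℂ] H) c * (T * a ^ n) := by rw [mul_assoc]
      _ = algebraMap ℝ (H →L[ℂ] H) c * (b ^ n * T) := by rw [intertwine_pow T a b hab]
      _ = (algebraMap ℝ (H →L[ℂ] H) c * b ^ n) * T := by rw [mul_assoc]

lemma intertwine_cfc (T a b : H →L[ℂ] H) (ha : 0 ≤ a) (hb : 0 ≤ b)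
    (hab : T * a = b * T) {f : ℝ → ℝ} (hf : Continuous f) :
    T * cfc f a = cfc f b * T := by
  obtain htriv | hnt := subsingleton_or_nontrivial H
  · exact Subsingleton.elim _ _
  have ha' : IsSelfAdjoint a := IsSelfAdjoint.of_nonneg ha
  have hb' : IsSelfAdjoint b := IsSelfAdjoint.of_nonneg hb
  set R : ℝ := max ‖a‖ ‖b‖ with hR
  have hR0 : (0 : ℝ) ≤ R := le_max_of_le_left (norm_nonneg a)
  set s : Set ℝ := Set.Icc 0 R with hs
  have hspec_a : spectrum ℝ a ⊆ s := by
    intro x hx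
    refine ⟨spectrum_nonneg_of_nonneg ha hx, ?_⟩
    have := spectrum.norm_le_norm_of_mem hx
    rw [Real.norm_eq_abs] at this
    exact le_trans (le_abs_self x) (le_trans this (le_max_left _ _))
  have hspec_b : spectrum ℝ b ⊆ s := by
    intro x hx
    refine ⟨spectrum_nonneg_of_nonneg hb hx, ?_⟩
    have := spectrum.norm_le_norm_of_mem hx
    rw [Real.norm_eq_abs] at this
    exact le_trans (le_abs_self x) (le_trans this (le_max_right _ _))
  -- polynomial approximation
  have happrox : ∀ ε > (0 : ℝ), ∃ p : ℝ[X], ∀ x ∈ s, |f x - p.eval x| ≤ ε := by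
    intro ε hε
    haveI hcs : CompactSpace s := isCompact_iff_compactSpace.mp isCompact_Icc
    have htop := polynomialFunctions.topologicalClosure s
    set fc : C(s, ℝ) := ContinuousMap.restrict s ⟨f, hf⟩ with hfc
    have hmem : fc ∈ (polynomialFunctions s).topologicalClosure := by
      rw [htop]; exact Algebra.mem_top
    have hmem' : fc ∈ closure ((polynomialFunctions s : Subalgebra ℝ C(s, ℝ)) : Set C(s, ℝ)) :=
      hmem
    obtain ⟨g, hg, hdist⟩ := Metric.mem_closure_iff.mp hmem' ε hε
    rw [polynomialFunctions_coe] at hg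
    obtain ⟨p, rfl⟩ := hg
    refine ⟨p, fun x hx => ?_⟩
    have hle := ContinuousMap.dist_apply_le_dist (f := fc)
      (g := Polynomial.toContinuousMapOnAlgHom s p) (⟨x, hx⟩ : s)
    have : dist (f x) (p.eval x) ≤ dist fc (Polynomial.toContinuousMapOnAlgHom s p) := hle
    rw [Real.dist_eq] at this
    exact le_trans this hdist.le
  -- main estimate
  have key : ∀ ε > (0 : ℝ), ‖T * cfc f a - cfc f b * T‖ ≤ ε * (2 * ‖T‖) := by
    intro ε hε
    obtain ⟨p, hp⟩ := happrox ε hε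
    have l1 : ‖cfc f a - aeval a p‖ ≤ ε := by
      rw [← cfc_polynomial p a, ← cfc_sub f p.eval a]
      exact norm_cfc_le hε.le fun x hx => by
        simpa [Real.norm_eq_abs] using hp x (hspec_a hx)
    have l2 : ‖cfc f b - aeval b p‖ ≤ ε := by
      rw [← cfc_polynomial p b, ← cfc_sub f p.eval b]
      exact norm_cfc_le hε.le fun x hx => by
        simpa [Real.norm_eq_abs] using hp x (hspec_b hx)
    have hsplit : T * cfc f a - cfc f b * T
        = T * (cfc f a - aeval a p) - (cfc f b - aeval b p) * T := by
      rw [mul_sub, sub_mul, intertwine_aeval T a b hab]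
      abel
    calc ‖T * cfc f a - cfc f b * T‖
        ≤ ‖T * (cfc f a - aeval a p)‖ + ‖(cfc f b - aeval b p) * T‖ := by
          rw [hsplit]; exact norm_sub_le _ _
      _ ≤ ‖T‖ * ‖cfc f a - aeval a p‖ + ‖cfc f b - aeval b p‖ * ‖T‖ := by
          gcongr <;> [exact norm_mul_le _ _; exact norm_mul_le _ _]
      _ ≤ ‖T‖ * ε + ε * ‖T‖ := by gcongr
      _ = ε * (2 * ‖T‖) := by ring
  have hz : ‖T * cfc f a - cfc f b * T‖ ≤ 0 := by
    refine le_of_forall_pos_le_add fun ε hε => ?_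
    rcases le_or_gt (2 * ‖T‖) 1 with h | h
    · have := key ε hε
      nlinarith [norm_nonneg (T * cfc f a - cfc f b * T)]
    · have h2 : (0:ℝ) < 2 * ‖T‖ := lt_trans one_pos h
      have := key (ε / (2 * ‖T‖)) (by positivity)
      rw [div_mul_cancel₀ _ h2.ne'] at this
      linarith
  have := le_antisymm hz (norm_nonneg _)
  rw [norm_eq_zero, sub_eq_zero] at this
  exact this

end Intertwine

/-- The Halmos block `[[D_T, -T*],[T, D_{T*}]]` of a contraction `T` is a unitary on
`H ⊕ H`: it preserves the Hilbert norm of `H ⊕ H` and is surjective. -/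
theorem halmos_block_unitary
    {H : Type*} [NormedAddCommGroup H] [InnerProductSpace ℂ H] [CompleteSpace H]
    (T D D' : H →L[ℂ] H) (hT : ‖T‖ ≤ 1)
    (hDpos : D.IsPositive)
    (hD2 : D * D = 1 - ContinuousLinearMap.adjoint T * T)
    (hD'pos : D'.IsPositive)
    (hD'2 : D' * D' = 1 - T * ContinuousLinearMap.adjoint T) :
    (∀ x y : H,
      ‖D x - ContinuousLinearMap.adjoint T y‖ ^ 2 + ‖T x + D' y‖ ^ 2
        = ‖x‖ ^ 2 + ‖y‖ ^ 2) ∧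
    Function.Surjective
      (fun q : H × H =>
        (D q.1 - ContinuousLinearMap.adjoint T q.2, T q.1 + D' q.2)) := by
  have hD0 : (0 : H →L[ℂ] H) ≤ D := (ContinuousLinearMap.nonneg_iff_isPositive D).mpr hDpos
  have hD'0 : (0 : H →L[ℂ] H) ≤ D' := (ContinuousLinearMap.nonneg_iff_isPositive D').mpr hD'pos
  have hDsa : IsSelfAdjoint D := hDpos.isSelfAdjoint
  have hD'sa : IsSelfAdjoint D' := hD'pos.isSelfAdjoint
  have hA : (0 : H →L[ℂ] H) ≤ 1 - adjoint T * T := by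
    rw [← hD2]
    have := star_mul_self_nonneg D
    rwa [hDsa.star_eq] at this
  have hB : (0 : H →L[ℂ] H) ≤ 1 - T * adjoint T := by
    rw [← hD'2]
    have := star_mul_self_nonneg D'
    rwa [hD'sa.star_eq] at this
  -- identify D, D' with cfc of Real.sqrt
  have hDeq : D = cfc Real.sqrt (1 - adjoint T * T) := by
    have h1 : CFC.sqrt (1 - adjoint T * T) = D := CFC.sqrt_unique hD2 hD0
    rw [← h1, CFC.sqrt_eq_real_sqrt _ hA, cfcₙ_eq_cfc]
  have hD'eq : D' = cfc Real.sqrt (1 - T * adjoint T) := by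
    have h1 : CFC.sqrt (1 - T * adjoint T) = D' := CFC.sqrt_unique hD'2 hD'0
    rw [← h1, CFC.sqrt_eq_real_sqrt _ hB, cfcₙ_eq_cfc]
  have hTA : T * (1 - adjoint T * T) = (1 - T * adjoint T) * T := by noncomm_ring
  have hTD : T * D = D' * T := by
    rw [hDeq, hD'eq]
    exact intertwine_cfc T _ _ hA hB hTA Real.continuous_sqrt
  have hadj : D * adjoint T = adjoint T * D' := by
    have := congrArg star hTD
    simpa [star_mul, hDsa.star_eq, hD'sa.star_eq, star_eq_adjoint] using this
  have hDadj : adjoint D = D := hDsa.adjoint_eq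
  have hD'adj : adjoint D' = D' := hD'sa.adjoint_eq
  constructor
  · intro x y
    have hx : (‖D x‖ : ℂ) ^ 2 + (‖T x‖ : ℂ) ^ 2 = (‖x‖ : ℂ) ^ 2 := by
      have e1 : (inner ℂ ((D * D) x) x : ℂ) = inner ℂ (D x) (D x) := by
        rw [mul_apply_eq_comp]
        calc (inner ℂ (D (D x)) x : ℂ) = inner ℂ ((adjoint D) (D x)) x := by rw [hDadj]
          _ = inner ℂ (D x) (D x) := adjoint_inner_left D x (D x)
      have e2 : (inner ℂ ((adjoint T * T) x) x : ℂ) = inner ℂ (T x) (T x) := by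
        rw [mul_apply_eq_comp]
        exact adjoint_inner_left T x (T x)
      have e3 : (D * D) x + (adjoint T * T) x = x := by
        have h : (D * D + adjoint T * T) = 1 := by rw [hD2]; abel
        calc (D * D) x + (adjoint T * T) x = (D * D + adjoint T * T) x := (add_apply _ _ _).symm
          _ = x := by rw [h, one_apply_eq_self]
      have : (inner ℂ (D x) (D x) : ℂ) + inner ℂ (T x) (T x) = inner ℂ x x := by
        rw [← e1, ← e2, ← inner_add_left, e3]
      simpa [inner_self_eq_norm_sq_to_K] using this
    have hy : (‖adjoint T y‖ : ℂ) ^ 2 + (‖D' y‖ : ℂ) ^ 2 = (‖y‖ : ℂ) ^ 2 := by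
      have e1 : (inner ℂ ((T * adjoint T) y) y : ℂ) = inner ℂ (adjoint T y) (adjoint T y) := by
        rw [mul_apply_eq_comp]
        exact (adjoint_inner_right T (adjoint T y) y).symm
      have e2 : (inner ℂ ((D' * D') y) y : ℂ) = inner ℂ (D' y) (D' y) := by
        rw [mul_apply_eq_comp]
        calc (inner ℂ (D' (D' y)) y : ℂ) = inner ℂ ((adjoint D') (D' y)) y := by rw [hD'adj]
          _ = inner ℂ (D' y) (D' y) := adjoint_inner_left D' y (D' y)
      have e3 : (T * adjoint T) y + (D' * D') y = y := by
        have h : (T * adjoint T + D' * D') = 1 := by rw [hD'2]; abel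
        calc (T * adjoint T) y + (D' * D') y = (T * adjoint T + D' * D') y :=
            (add_apply _ _ _).symm
          _ = y := by rw [h, one_apply_eq_self]
      have : (inner ℂ (adjoint T y) (adjoint T y) : ℂ) + inner ℂ (D' y) (D' y) = inner ℂ y y := by
        rw [← e1, ← e2, ← inner_add_left, e3]
      simpa [inner_self_eq_norm_sq_to_K] using this
    have hcross : (inner ℂ (D x) (adjoint T y) : ℂ) = inner ℂ (T x) (D' y) := by
      have c1 : (inner ℂ (D x) (adjoint T y) : ℂ) = inner ℂ (T (D x)) y :=
        adjoint_inner_right T (D x) y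
      have c2 : (inner ℂ (T x) (D' y) : ℂ) = inner ℂ (D' (T x)) y := by
        calc (inner ℂ (T x) (D' y) : ℂ) = inner ℂ ((adjoint D') (T x)) y :=
            (adjoint_inner_left D' y (T x)).symm
          _ = inner ℂ (D' (T x)) y := by rw [hD'adj]
      have c3 : D' (T x) = T (D x) := by
        have := DFunLike.congr_fun hTD x
        simpa [mul_apply] using this.symm
      rw [c1, c2, c3]
    have hx' : ‖D x‖ ^ 2 + ‖T x‖ ^ 2 = ‖x‖ ^ 2 := by exact_mod_cast hx
    have hy' : ‖adjoint T y‖ ^ 2 + ‖D' y‖ ^ 2 = ‖y‖ ^ 2 := by exact_mod_cast hy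
    have hcross' : Complex.re (inner ℂ (D x) (adjoint T y) : ℂ)
        = Complex.re (inner ℂ (T x) (D' y) : ℂ) := by rw [hcross]
    have expand1 := @norm_sub_sq ℂ H _ _ _ (D x) (adjoint T y)
    have expand2 := @norm_add_sq ℂ H _ _ _ (T x) (D' y)
    rw [expand1, expand2]
    simp only [RCLike.re_to_complex] at *
    linarith
  · rintro ⟨u, v⟩
    refine ⟨(D u + adjoint T v, D' v - T u), ?_⟩
    have e1 : D (D u) + adjoint T (T u) = u := by
      have h : (D * D + adjoint T * T) = 1 := by rw [hD2]; abel
      have := DFunLike.congr_fun h u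
      simpa [add_apply, mul_apply, one_apply] using this
    have e2 : T (adjoint T v) + D' (D' v) = v := by
      have h : (T * adjoint T + D' * D') = 1 := by rw [hD'2]; abel
      have := DFunLike.congr_fun h v
      simpa [add_apply, mul_apply, one_apply] using this
    have e3 : D (adjoint T v) = adjoint T (D' v) := by
      have := DFunLike.congr_fun hadj v
      simpa [mul_apply] using this
    have e4 : T (D u) = D' (T u) := by
      have := DFunLike.congr_fun hTD u
      simpa [mul_apply] using this
    simp only [Prod.mk.injEq]
    constructor
    · simp only [map_add, map_sub]
      rw [e3]
      calc D (D u) + adjoint T (D' v) - (adjoint T (D' v) - adjoint T (T u))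
          = D (D u) + adjoint T (T u) := by abel
        _ = u := e1
    · simp only [map_add, map_sub]
      rw [e4]
      calc D' (T u) + T (adjoint T v) + (D' (D' v) - D' (T u))
          = T (adjoint T v) + D' (D' v) := by abel
        _ = v := e2
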